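/- The squares S⁺_{n,k} are pairwise disjoint: if (n, k) ≠ (m, j) with n, m ∈ ℕ and k, j ∈ ℤ, then S⁺_{n,k} ∩ S⁺_{m,j} = ∅. -/
import Mathlib


/-
STATEMENT 3: The squares S⁺_{n,k} are pairwise disjoint: if (n,k) ≠ (m,j) with
n,m ∈ ℕ and k,j ∈ ℤ, then S⁺_{n,k} ∩ S⁺_{m,j} = ∅.
-/

noncomputable section

/-- γ_{n,k}(z) = 2^{−n}(z + k). -/
def gammaMap (n : ℕ) (k : ℤ) (z : ℂ) : ℂ := (2 : ℂ) ^ (-(n : ℤ)) * (z + (k : ℂ))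

/-- The square S⁺_{0,0} = {z : |Re z| ≤ 3/10, |Im z − 1| ≤ 3/10}. -/
def Sp00 : Set ℂ := {z : ℂ | |z.re| ≤ 3 / 10 ∧ |z.im - 1| ≤ 3 / 10}

/-- S⁺_{n,k} = γ_{n,k}(S⁺_{0,0}). -/
def Sp (n : ℕ) (k : ℤ) : Set ℂ := gammaMap n k '' Sp00

lemma two_pow_cancel (n : ℕ) : (2:ℝ) ^ n * (2:ℝ) ^ (-(n:ℤ)) = 1 := by
  rw [← zpow_natCast, ← zpow_add₀ (by norm_num : (2:ℝ) ≠ 0)]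
  simp

lemma mem_Sp_iff (n : ℕ) (k : ℤ) (z : ℂ) :
    z ∈ Sp n k ↔ |(2:ℝ)^n * z.re - k| ≤ 3/10 ∧ |(2:ℝ)^n * z.im - 1| ≤ 3/10 := by
  have hc : (2:ℂ) ^ (-(n:ℤ)) = (((2:ℝ) ^ (-(n:ℤ)) : ℝ) : ℂ) := by
    push_cast; ring
  have hc2 : (2:ℂ) ^ n = (((2:ℝ) ^ n : ℝ) : ℂ) := by push_cast; ring
  constructor
  · rintro ⟨w, ⟨h1, h2⟩, rfl⟩
    have hre : (gammaMap n k w).re = (2:ℝ)^(-(n:ℤ)) * (w.re + k) := by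
      rw [gammaMap, hc]
      simp only [Complex.re_ofReal_mul, Complex.add_re, Complex.intCast_re]
    have him : (gammaMap n k w).im = (2:ℝ)^(-(n:ℤ)) * w.im := by
      rw [gammaMap, hc]
      simp only [Complex.im_ofReal_mul, Complex.add_im, Complex.intCast_im, add_zero]
    rw [hre, him]
    have e1 : (2:ℝ)^n * ((2:ℝ)^(-(n:ℤ)) * (w.re + k)) - k = w.re := by
      rw [← mul_assoc, two_pow_cancel, one_mul]; ring
    have e2 : (2:ℝ)^n * ((2:ℝ)^(-(n:ℤ)) * w.im) = w.im := by
      rw [← mul_assoc, two_pow_cancel, one_mul]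
    rw [e1, e2]
    exact ⟨h1, h2⟩
  · rintro ⟨h1, h2⟩
    refine ⟨(2:ℂ)^(n:ℕ) * z - k, ⟨?_, ?_⟩, ?_⟩
    · show |((2:ℂ)^(n:ℕ) * z - (k:ℂ)).re| ≤ 3/10
      have : ((2:ℂ)^(n:ℕ) * z - (k:ℂ)).re = (2:ℝ)^n * z.re - k := by
        rw [hc2]
        simp only [Complex.sub_re, Complex.re_ofReal_mul, Complex.intCast_re]
      rw [this]; exact h1
    · show |((2:ℂ)^(n:ℕ) * z - (k:ℂ)).im - 1| ≤ 3/10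
      have : ((2:ℂ)^(n:ℕ) * z - (k:ℂ)).im = (2:ℝ)^n * z.im := by
        rw [hc2]
        simp only [Complex.sub_im, Complex.im_ofReal_mul, Complex.intCast_im, sub_zero]
      rw [this]; exact h2
    · show (2:ℂ)^(-(n:ℤ)) * ((2:ℂ)^n * z - k + k) = z
      have h2c : ((2:ℂ)^(-(n:ℤ))) * (2:ℂ)^(n:ℕ) = 1 := by
        rw [← zpow_natCast, ← zpow_add₀ (by norm_num : (2:ℂ) ≠ 0)]
        simp
      calc (2:ℂ)^(-(n:ℤ)) * ((2:ℂ)^n * z - k + k)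
          = ((2:ℂ)^(-(n:ℤ)) * (2:ℂ)^n) * z := by ring
        _ = z := by rw [h2c, one_mul]

theorem squares_pairwise_disjoint :
    ∀ (n m : ℕ) (k j : ℤ), (n, k) ≠ (m, j) → Sp n k ∩ Sp m j = ∅ := by
  intro n m k j hne
  by_contra h
  obtain ⟨z, hz1, hz2⟩ := Set.nonempty_iff_ne_empty.mpr h
  rw [mem_Sp_iff] at hz1 hz2
  obtain ⟨hk1, hi1⟩ := hz1
  obtain ⟨hk2, hi2⟩ := hz2
  rw [abs_le] at hk1 hi1 hk2 hi2
  have hnm : n = m := by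
    by_contra hne'
    rcases Nat.lt_or_ge n m with hlt | hge
    · have hp : (2:ℝ)^(n+1) ≤ (2:ℝ)^m := pow_le_pow_right₀ (by norm_num) hlt
      have hy : (0:ℝ) < z.im := by
        nlinarith [pow_pos (by norm_num : (0:ℝ) < 2) n]
      rw [pow_succ] at hp
      nlinarith [pow_pos (by norm_num : (0:ℝ) < 2) n, pow_pos (by norm_num : (0:ℝ) < 2) m]
    · have hlt : m < n := lt_of_le_of_ne hge (fun h => hne' h.symm)
      have hp : (2:ℝ)^(m+1) ≤ (2:ℝ)^n := pow_le_pow_right₀ (by norm_num) hlt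
      have hy : (0:ℝ) < z.im := by
        nlinarith [pow_pos (by norm_num : (0:ℝ) < 2) m]
      rw [pow_succ] at hp
      nlinarith [pow_pos (by norm_num : (0:ℝ) < 2) n, pow_pos (by norm_num : (0:ℝ) < 2) m]
  subst hnm
  have hkj : k = j := by
    have hr : |(k:ℝ) - j| < 1 := by
      rw [abs_lt]
      constructor <;> nlinarith
    have h1 : |k - j| < (1:ℤ) := by
      rw [← Int.cast_sub, ← Int.cast_abs] at hr
      exact_mod_cast hr
    rw [abs_lt] at h1
    omega
  exact hne (by rw [hkj])

end
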